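/- arXiv:math/9307223 — 4 statements merged into one kernel-verified Lean document; each statement's English description precedes it below -/
import Mathlib

section
/- Let dλ be a positive measure on ℝ with finite moments of all orders, and let ζ_1,…,ζ_M be distinct nonzero complex numbers with 1+ζ_μ t ≠ 0 for all t in the closure of supp(dλ). Define ω_m(t) = ∏_{μ=1}^M (1+ζ_μ t)^{s_μ} with ∑ s_μ = m and 1 ≤ m ≤ 2n. Suppose there exist nodes t_ν^G ∈ supp(dλ) and weights w_ν^G (ν = 1,…,n) such that ∫ f(t) dλ(t)/ω_m(t) = ∑_{ν=1}^n w_ν^G f(t_ν^G) for all polynomials f of degree ≤ 2n−1. Then, setting t_ν = t_ν^G and λ_ν = w_ν^G ω_m(t_ν^G), the rule ∑_{ν=1}^n λ_ν g(t_ν) integrates exactly (against dλ) every function g(t) = (1+ζ_μ t)^{−s} for μ = 1,…,M and s = 1,…,s_μ. -/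
open MeasureTheory Finset

/-- The support of a measure on ℝ: points all of whose neighborhoods have
positive measure. -/
def measSupport (μ : Measure ℝ) : Set ℝ := {x | ∀ U ∈ nhds x, μ U ≠ 0}

/-- The complement of the support is null. -/
lemma measSupport_compl_null (μ : Measure ℝ) : μ (measSupport μ)ᶜ = 0 := by
  have h : ∀ x : ↥((measSupport μ)ᶜ), ∃ U : Set ℝ, IsOpen U ∧ (x : ℝ) ∈ U ∧ μ U = 0 := by
    rintro ⟨x, hx⟩
    simp only [measSupport, Set.mem_compl_iff, Set.mem_setOf_eq, not_forall] at hx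
    obtain ⟨U, hU, h0⟩ := hx
    obtain ⟨V, hVU, hVo, hxV⟩ := mem_nhds_iff.mp hU
    refine ⟨V, hVo, hxV, measure_mono_null hVU (by simpa using h0)⟩
  choose U hUo hxU hU0 using h
  obtain ⟨T, hTc, hTeq⟩ := TopologicalSpace.isOpen_iUnion_countable U hUo
  have hcover : (measSupport μ)ᶜ ⊆ ⋃ i ∈ T, U i := by
    rw [hTeq]
    intro x hx
    exact Set.mem_iUnion.mpr ⟨⟨x, hx⟩, hxU _⟩
  exact measure_mono_null hcover
    ((measure_biUnion_null_iff hTc).mpr fun i _ => hU0 i)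

/-- Theorem 1.1, direct part, rational functions: if an `n`-point
rule with nodes in `supp(dλ)` is exact for all polynomials of degree `≤ 2n−1`
against the measure `dλ/ω_m`, where `ω_m(t) = ∏_μ (1+ζ_μ t)^{s_μ}`, then the
rule with nodes `t_ν = t_ν^G` and weights `λ_ν = w_ν^G ω_m(t_ν^G)` integrates
exactly against `dλ` every `g(t) = (1+ζ_μ t)^{−s}`, `1 ≤ s ≤ s_μ`. -/
theorem stmt_0 (lam : Measure ℝ)
    (hmom : ∀ k : ℕ, Integrable (fun t : ℝ => t ^ k) lam)
    (M m n : ℕ) (hn : 1 ≤ n) (hm1 : 1 ≤ m) (hm2 : m ≤ 2 * n)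
    (ζ : Fin M → ℂ) (hζ0 : ∀ μ, ζ μ ≠ 0) (hζinj : Function.Injective ζ)
    (hζ : ∀ (μ : Fin M), ∀ t ∈ closure (measSupport lam),
      (1 : ℂ) + ζ μ * (t : ℂ) ≠ 0)
    (s : Fin M → ℕ) (hs : ∀ μ, 1 ≤ s μ) (hsum : ∑ μ, s μ = m)
    (tG : Fin n → ℝ) (wG : Fin n → ℂ)
    (htG : ∀ ν, tG ν ∈ measSupport lam)
    (hexact : ∀ f : Polynomial ℂ, f.degree < (2 * n : ℕ) →
      ∫ t : ℝ, f.eval (t : ℂ) / ∏ μ, ((1 : ℂ) + ζ μ * (t : ℂ)) ^ s μ ∂lam =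
        ∑ ν, wG ν * f.eval ((tG ν : ℝ) : ℂ)) :
    ∀ (μ : Fin M) (j : ℕ), 1 ≤ j → j ≤ s μ →
      ∫ t : ℝ, ((1 : ℂ) + ζ μ * (t : ℂ)) ^ (-(j : ℤ)) ∂lam =
        ∑ ν, (wG ν * ∏ μ', ((1 : ℂ) + ζ μ' * (tG ν : ℂ)) ^ s μ') *
          ((1 : ℂ) + ζ μ * (tG ν : ℂ)) ^ (-(j : ℤ)) := by
  intro μ j hj1 hj2
  classical
  set f : Polynomial ℂ :=
    ((1 : Polynomial ℂ) + Polynomial.C (ζ μ) * Polynomial.X) ^ (s μ - j) *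
      ∏ μ' ∈ univ.erase μ,
        ((1 : Polynomial ℂ) + Polynomial.C (ζ μ') * Polynomial.X) ^ s μ' with hf
  -- key algebraic identity
  have key : ∀ z : ℂ, f.eval z * ((1 : ℂ) + ζ μ * z) ^ j =
      ∏ μ', ((1 : ℂ) + ζ μ' * z) ^ s μ' := by
    intro z
    have hev : f.eval z = ((1 : ℂ) + ζ μ * z) ^ (s μ - j) *
        ∏ μ' ∈ univ.erase μ, ((1 : ℂ) + ζ μ' * z) ^ s μ' := by
      simp [hf, Polynomial.eval_prod]
    rw [hev, mul_right_comm, ← pow_add, Nat.sub_add_cancel hj2]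
    exact Finset.mul_prod_erase univ
      (fun μ' => ((1 : ℂ) + ζ μ' * z) ^ s μ') (mem_univ μ)
  -- degree bound
  have hdeg : f.degree < (2 * n : ℕ) := by
    have hlin : ∀ μ' : Fin M,
        ((1 : Polynomial ℂ) + Polynomial.C (ζ μ') * Polynomial.X).natDegree ≤ 1 := by
      intro μ'
      refine le_trans (Polynomial.natDegree_add_le _ _) ?_
      simp [Polynomial.natDegree_C_mul_le]
      exact le_trans (Polynomial.natDegree_mul_le) (by simp)
    have h1 : f.natDegree ≤ (s μ - j) + ∑ μ' ∈ univ.erase μ, s μ' := by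
      refine le_trans (Polynomial.natDegree_mul_le) (add_le_add ?_ ?_)
      · exact le_trans (Polynomial.natDegree_pow_le)
          (by simpa using Nat.mul_le_mul_left (s μ - j) (hlin μ))
      · refine le_trans (Polynomial.natDegree_prod_le _ _) ?_
        refine Finset.sum_le_sum fun i _ => ?_
        exact le_trans (Polynomial.natDegree_pow_le)
          (by simpa using Nat.mul_le_mul_left (s i) (hlin i))
    have hsum' : s μ + ∑ μ' ∈ univ.erase μ, s μ' = m := by
      rw [Finset.add_sum_erase univ s (mem_univ μ)]; exact hsum
    have h2 : f.natDegree < 2 * n := by omega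
    calc f.degree ≤ (f.natDegree : WithBot ℕ) := Polynomial.degree_le_natDegree
      _ < ((2 * n : ℕ) : WithBot ℕ) := by exact_mod_cast h2
  have hex := hexact f hdeg
  -- nonvanishing at points of the support
  have hne : ∀ t : ℝ, t ∈ measSupport lam → ∀ μ' : Fin M,
      (1 : ℂ) + ζ μ' * (t : ℂ) ≠ 0 := fun t ht μ' => hζ μ' t (subset_closure ht)
  -- rewrite LHS
  have hLHS : ∫ t : ℝ, ((1 : ℂ) + ζ μ * (t : ℂ)) ^ (-(j : ℤ)) ∂lam =
      ∫ t : ℝ, f.eval (t : ℂ) / ∏ μ', ((1 : ℂ) + ζ μ' * (t : ℂ)) ^ s μ' ∂lam := by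
    refine integral_congr_ae ?_
    have hae : ∀ᵐ t ∂lam, t ∈ measSupport lam := by
      rw [ae_iff]
      exact measure_mono_null (fun x hx => hx) (measSupport_compl_null lam)
    filter_upwards [hae] with t ht
    have hA : (1 : ℂ) + ζ μ * (t : ℂ) ≠ 0 := hne t ht μ
    have hAj : ((1 : ℂ) + ζ μ * (t : ℂ)) ^ j ≠ 0 := pow_ne_zero _ hA
    have hprod : ∏ μ', ((1 : ℂ) + ζ μ' * (t : ℂ)) ^ s μ' ≠ 0 :=
      Finset.prod_ne_zero_iff.mpr fun μ' _ => pow_ne_zero _ (hne t ht μ')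
    have hfz : f.eval (t : ℂ) ≠ 0 := by
      intro h0
      rw [← key (t : ℂ), h0, zero_mul] at hprod
      exact hprod rfl
    rw [← key (t : ℂ), div_mul_cancel_left₀ hfz, zpow_neg, zpow_natCast]
  rw [hLHS, hex]
  refine Finset.sum_congr rfl fun ν _ => ?_
  have hA : (1 : ℂ) + ζ μ * (tG ν : ℂ) ≠ 0 := hne _ (htG ν) μ
  have hAj : ((1 : ℂ) + ζ μ * (tG ν : ℂ)) ^ j ≠ 0 := pow_ne_zero _ hA
  have hf' : f.eval ((tG ν : ℝ) : ℂ) =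
      (∏ μ', ((1 : ℂ) + ζ μ' * (tG ν : ℂ)) ^ s μ') *
        ((1 : ℂ) + ζ μ * (tG ν : ℂ)) ^ (-(j : ℤ)) := by
    rw [zpow_neg, zpow_natCast, ← key ((tG ν : ℝ) : ℂ),
      mul_inv_cancel_right₀ hAj]
  rw [hf', mul_assoc]
end

section
/- ∫_{−1}^{1} (πt/2)/sin(πt/2) dt = 8C/π, where C = ∑_{k=0}^∞ (−1)^k/(2k+1)^2 is Catalan's constant (the integrand extended by value 1 at t = 0). -/
open Real intervalIntegral

section CatalanAux
open Filter Topology MeasureTheory Set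


lemma alt_partial_bounds (a : ℕ → ℝ) (h0 : ∀ k, 0 ≤ a k) (hd : ∀ k, a (k+1) ≤ a k) (n : ℕ) :
    |∑ k ∈ Finset.range n, (-1 : ℝ)^k * a k| ≤ a 0 := by
  have e : ∀ m : ℕ, (-1:ℝ)^(2*m) = 1 := fun m => by rw [pow_mul]; norm_num
  have e' : ∀ m : ℕ, (-1:ℝ)^(2*m+1) = -1 := fun m => by rw [pow_succ, e m]; norm_num
  have key : ∀ m : ℕ, 0 ≤ (∑ k ∈ Finset.range (2*m), (-1:ℝ)^k * a k) ∧
      (∑ k ∈ Finset.range (2*m+1), (-1:ℝ)^k * a k) ≤ a 0 := by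
    intro m
    induction m with
    | zero => simp
    | succ m ih =>
      have r1 : 2*(m+1) = (2*m+1)+1 := by ring
      have r2 : 2*(m+1)+1 = ((2*m)+1+1)+1 := by ring
      have e2 : (-1:ℝ)^(2*m+1+1) = 1 := by
        rw [show 2*m+1+1 = 2*(m+1) by ring, e]
      constructor
      · rw [r1, Finset.sum_range_succ, Finset.sum_range_succ, e, e']
        have := hd (2*m); have := ih.1; nlinarith
      · rw [r2, Finset.sum_range_succ, Finset.sum_range_succ, e2, e']
        have h1 := hd (2*m+1); have h2 := ih.2
        have h3 := h0 (2*m+2)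
        rw [show 2*m+1+1 = 2*m+2 from rfl]
        nlinarith
  have step : ∀ m : ℕ, (∑ k ∈ Finset.range (2*m+1), (-1:ℝ)^k * a k)
      = (∑ k ∈ Finset.range (2*m), (-1:ℝ)^k * a k) + a (2*m) := by
    intro m; rw [Finset.sum_range_succ, e]; ring
  rcases Nat.even_or_odd n with ⟨m, hm⟩ | ⟨m, hm⟩
  · have hn : n = 2*m := by omega
    subst hn
    have h1 := (key m).1; have h2 := (key m).2; have h3 := step m
    have := h0 (2*m)
    rw [abs_le]; constructor <;> nlinarith
  · have hn : n = 2*m+1 := by omega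
    subst hn
    have h1 := (key m).1; have h2 := (key m).2; have h3 := step m
    have := h0 (2*m)
    rw [abs_le]; constructor <;> nlinarith

lemma summable_catalan : Summable (fun k : ℕ => (-1 : ℝ)^k / (2*(k:ℝ)+1)^2) := by
  apply Summable.of_abs
  have h : Summable (fun k : ℕ => 1 / ((k:ℝ)+1)^2) := by
    have := Real.summable_one_div_nat_pow.mpr (le_refl 2)
    exact_mod_cast (summable_nat_add_iff 1).mpr this
  apply h.of_nonneg_of_le (fun k => abs_nonneg _)
  intro k
  have hk : (0:ℝ) < 2*(k:ℝ)+1 := by positivity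
  rw [abs_div, abs_pow, abs_neg, abs_one, one_pow, abs_of_pos (by positivity : (0:ℝ) < (2*(k:ℝ)+1)^2)]
  apply div_le_div_of_nonneg_left one_pos.le (by positivity : (0:ℝ) < ((k:ℝ)+1)^2)
  nlinarith [Nat.cast_nonneg (α := ℝ) k]


noncomputable def Hfun : ℝ → ℝ := fun x => if x = 0 then 1 else x / Real.sin x

noncomputable def ffun : ℝ → ℝ := fun t => if t = 0 then 2 else 2 * Real.arctan t / t

lemma continuousAt_of_tendsto_punctured {f : ℝ → ℝ} {a L : ℝ}
    (h : Tendsto f (𝓝[≠] a) (𝓝 L)) (hfa : f a = L) : ContinuousAt f a := by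
  rw [ContinuousAt, hfa, ← nhdsNE_sup_pure]
  refine h.sup ?_
  rw [tendsto_pure_left]
  intro s hs
  rw [hfa]
  exact mem_of_mem_nhds hs

lemma tendsto_x_div_sin : Tendsto (fun x : ℝ => x / Real.sin x) (𝓝[≠] (0:ℝ)) (𝓝 1) := by
  have h := Real.hasDerivAt_sin 0
  rw [hasDerivAt_iff_tendsto_slope] at h
  have h' : Tendsto (fun x : ℝ => Real.sin x / x) (𝓝[≠] 0) (𝓝 1) := by
    have : (slope Real.sin 0) = fun x : ℝ => Real.sin x / x := by
      funext x; simp [slope_def_field]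
    rw [this, Real.cos_zero] at h
    exact h
  have := h'.inv₀ one_ne_zero
  simpa [inv_div] using this

lemma continuousAt_Hfun_zero : ContinuousAt Hfun 0 := by
  apply continuousAt_of_tendsto_punctured (L := 1)
  · apply tendsto_x_div_sin.congr'
    filter_upwards [self_mem_nhdsWithin] with x hx
    have hx' : x ≠ 0 := hx
    simp [Hfun, hx']
  · simp [Hfun]

lemma continuous_ffun : Continuous ffun := by
  rw [continuous_iff_continuousAt]
  intro x
  by_cases hx : x = 0
  · subst hx
    apply continuousAt_of_tendsto_punctured (L := 2)
    · have h := Real.hasDerivAt_arctan 0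
      rw [hasDerivAt_iff_tendsto_slope] at h
      have heq : (slope Real.arctan 0) = fun t : ℝ => Real.arctan t / t := by
        funext t; simp [slope_def_field]
      rw [heq] at h
      norm_num at h
      have := h.const_mul (2:ℝ)
      norm_num at this
      apply this.congr'
      filter_upwards [self_mem_nhdsWithin] with t htne
      have ht' : t ≠ 0 := htne
      simp only [ffun, if_neg ht']
      ring
    · simp [ffun]
  · have hne : ∀ᶠ y in 𝓝 x, y ≠ 0 := eventually_ne_nhds hx
    have hca : ContinuousAt (fun t : ℝ => 2 * Real.arctan t / t) x :=
      ((continuous_const.mul Real.continuous_arctan).continuousAt).div continuousAt_id hx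
    apply hca.congr
    filter_upwards [hne] with y hy
    simp [ffun, hy]

lemma continuousOn_Hfun : ContinuousOn Hfun (Set.Icc (-(π/2)) (π/2)) := by
  intro x hx
  by_cases hx0 : x = 0
  · subst hx0; exact continuousAt_Hfun_zero.continuousWithinAt
  · have hsin : Real.sin x ≠ 0 := by
      rw [Real.sin_ne_zero_iff]
      intro n hn
      rcases eq_or_ne n 0 with h0 | h0
      · subst h0; simp at hn; exact hx0 hn.symm
      · have h1 : (1:ℝ) ≤ |(n:ℝ)| := by
          have := Int.one_le_abs h0
          calc (1:ℝ) = ((1:ℤ):ℝ) := by norm_num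
          _ ≤ ((|n|:ℤ):ℝ) := by exact_mod_cast this
          _ = |(n:ℝ)| := by push_cast; simp
        have h2 : |x| ≤ π/2 := abs_le.mpr ⟨hx.1, hx.2⟩
        have h3 : |(n:ℝ) * π| = |(n:ℝ)| * π := by
          rw [abs_mul, abs_of_pos Real.pi_pos]
        have := Real.pi_pos
        rw [← hn, h3] at h2
        nlinarith
    have hca : ContinuousAt (fun y : ℝ => y / Real.sin y) x :=
      continuousAt_id.div Real.continuous_sin.continuousAt hsin
    apply ContinuousAt.continuousWithinAt
    apply hca.congr
    filter_upwards [eventually_ne_nhds hx0] with y hy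
    simp [Hfun, hy]

lemma integral_arctan_div :
    (∫ t in (0:ℝ)..1, Real.arctan t / t) = ∑' k : ℕ, (-1 : ℝ)^k / (2*(k:ℝ)+1)^2 := by
  set F : ℕ → ℝ → ℝ := fun n t => ∑ k ∈ Finset.range n, (-1:ℝ)^k * (t^(2*k) / (2*(k:ℝ)+1)) with hF
  have hFc : ∀ n, Continuous (F n) := by
    intro n
    apply continuous_finset_sum
    intro k _
    fun_prop
  -- DCT
  have hdct : Tendsto (fun n => ∫ t in (0:ℝ)..1, F n t) atTop
      (𝓝 (∫ t in (0:ℝ)..1, Real.arctan t / t)) := by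
    apply intervalIntegral.tendsto_integral_filter_of_dominated_convergence (bound := fun _ => 1)
    · exact Eventually.of_forall fun n => (hFc n).aestronglyMeasurable
    · refine Eventually.of_forall fun n => Eventually.of_forall fun t ht => ?_
      rw [Set.uIoc_of_le (by norm_num : (0:ℝ) ≤ 1)] at ht
      have h0t : 0 < t := ht.1
      have ht1 : t ≤ 1 := ht.2
      have := alt_partial_bounds (fun k => t^(2*k) / (2*(k:ℝ)+1))
        (fun k => by positivity)
        (fun k => by
          have hp : t^(2*(k+1)) ≤ t^(2*k) :=
            pow_le_pow_of_le_one h0t.le ht1 (by omega)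
          have hd : (0:ℝ) < 2*(k:ℝ)+1 := by positivity
          apply div_le_div₀ (by positivity) hp hd
          push_cast; linarith) n
      simp only [Real.norm_eq_abs]
      simpa using this
    · exact intervalIntegrable_const
    · have h1 : ∀ᵐ x : ℝ, x ≠ (1:ℝ) := by
        rw [ae_iff]
        simp [not_not, Real.volume_singleton]
      filter_upwards [h1] with x hx1 hxI
      rw [Set.uIoc_of_le (by norm_num : (0:ℝ) ≤ 1)] at hxI
      have h0x : 0 < x := hxI.1
      have hx1' : x < 1 := lt_of_le_of_ne hxI.2 hx1
      have hnorm : ‖x‖ < 1 := by rw [Real.norm_eq_abs, abs_of_pos h0x]; exact hx1'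
      have hs := (Real.hasSum_arctan hnorm).div_const x
      have heq : (fun n : ℕ => (-1:ℝ)^n * (x^(2*n) / (2*(n:ℝ)+1)))
          = fun n : ℕ => (-1:ℝ)^n * x^(2*n+1) / ((2*n+1 : ℕ) : ℝ) / x := by
        funext n
        rw [pow_succ]
        push_cast
        field_simp
      rw [← heq] at hs
      exact hs.tendsto_sum_nat
  -- value of partial-sum integrals
  have hval : ∀ n, (∫ t in (0:ℝ)..1, F n t)
      = ∑ k ∈ Finset.range n, (-1:ℝ)^k / (2*(k:ℝ)+1)^2 := by
    intro n
    rw [hF]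
    rw [intervalIntegral.integral_finset_sum]
    · apply Finset.sum_congr rfl
      intro k _
      have : (fun t : ℝ => (-1:ℝ)^k * (t^(2*k) / (2*(k:ℝ)+1)))
          = fun t : ℝ => ((-1:ℝ)^k / (2*(k:ℝ)+1)) * t^(2*k) := by
        funext t; ring
      rw [this, intervalIntegral.integral_const_mul, integral_pow]
      have hd : (0:ℝ) < 2*(k:ℝ)+1 := by positivity
      have hcast : ((2*k : ℕ) : ℝ) + 1 = 2*(k:ℝ)+1 := by push_cast; ring
      rw [hcast]
      rw [one_pow, zero_pow (by omega : 2*k+1 ≠ 0)]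
      field_simp
      ring
    · intro k _
      apply Continuous.intervalIntegrable
      fun_prop
  have hsum := summable_catalan.hasSum.tendsto_sum_nat
  simp_rw [hval] at hdct
  exact tendsto_nhds_unique hdct hsum

lemma integral_Hfun_half :
    (∫ x in (0:ℝ)..(π/2), Hfun x) = 2 * ∑' k : ℕ, (-1 : ℝ)^k / (2*(k:ℝ)+1)^2 := by
  have hpi := Real.pi_pos
  -- substitution t = tan (x/2)
  have hderiv : ∀ x ∈ Set.uIcc (0:ℝ) (π/2),
      HasDerivAt (fun x : ℝ => Real.tan (x/2)) (1/(2 * Real.cos (x/2)^2)) x := by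
    intro x hx
    rw [Set.uIcc_of_le (by positivity)] at hx
    have hcos : Real.cos (x/2) ≠ 0 := by
      apply ne_of_gt
      apply Real.cos_pos_of_mem_Ioo
      constructor <;> [linarith [hx.1]; linarith [hx.2]]
    have h1 : HasDerivAt (fun x : ℝ => x/2) (1/2) x := (hasDerivAt_id x).div_const 2 |>.congr_deriv (by norm_num)
    have h2 := (Real.hasDerivAt_tan hcos).comp x h1
    exact h2.congr_deriv (by ring)
  have hcont' : ContinuousOn (fun x : ℝ => 1/(2 * Real.cos (x/2)^2)) (Set.uIcc (0:ℝ) (π/2)) := by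
    rw [Set.uIcc_of_le (by positivity)]
    apply ContinuousOn.div continuousOn_const
    · fun_prop
    · intro x hx
      have hcos : Real.cos (x/2) ≠ 0 := by
        apply ne_of_gt
        apply Real.cos_pos_of_mem_Ioo
        constructor <;> [linarith [hx.1]; linarith [hx.2]]
      positivity
  have key := intervalIntegral.integral_comp_smul_deriv hderiv hcont' continuous_ffun
  have e0 : Real.tan ((0:ℝ)/2) = 0 := by norm_num
  have e1 : Real.tan (π/2/2) = 1 := by
    rw [show π/2/2 = π/4 by ring, Real.tan_pi_div_four]
  rw [e0, e1] at key
  have heq : (∫ x in (0:ℝ)..(π/2), Hfun x)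
      = ∫ x in (0:ℝ)..(π/2), (1/(2 * Real.cos (x/2)^2)) • ((ffun ∘ fun x => Real.tan (x/2)) x) := by
    apply intervalIntegral.integral_congr
    intro x hx
    rw [Set.uIcc_of_le (by positivity)] at hx
    by_cases hx0 : x = 0
    · subst hx0
      simp [Hfun, ffun, Real.cos_zero]
    · have hx0' : 0 < x := lt_of_le_of_ne hx.1 (Ne.symm hx0)
      have hx2 : 0 < x/2 := by linarith
      have hx2' : x/2 < π/2 := by linarith [hx.2]
      have htanpos : 0 < Real.tan (x/2) := Real.tan_pos_of_pos_of_lt_pi_div_two hx2 hx2'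
      have hsin2 : 0 < Real.sin (x/2) := Real.sin_pos_of_pos_of_lt_pi hx2 (by linarith)
      have hcos2 : 0 < Real.cos (x/2) := Real.cos_pos_of_mem_Ioo ⟨by linarith, hx2'⟩
      have hsinx : Real.sin x ≠ 0 := by
        have : Real.sin x = 2 * Real.sin (x/2) * Real.cos (x/2) := by
          rw [← Real.sin_two_mul]; congr 1; ring
        rw [this]; positivity
      simp only [Hfun, ffun, Function.comp_apply, if_neg hx0, if_neg (ne_of_gt htanpos)]
      rw [Real.arctan_tan (by linarith) hx2']
      have hsx : Real.sin x = 2 * Real.sin (x/2) * Real.cos (x/2) := by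
        rw [← Real.sin_two_mul]; congr 1; ring
      rw [Real.tan_eq_sin_div_cos, hsx]
      rw [smul_eq_mul]
      field_simp
  rw [heq, key]
  -- now ∫ ffun = 2 * ∫ arctan t / t
  have hcongr : (∫ t in (0:ℝ)..1, ffun t) = ∫ t in (0:ℝ)..1, 2 * (Real.arctan t / t) := by
    apply intervalIntegral.integral_congr_ae
    apply Eventually.of_forall
    intro t ht
    rw [Set.uIoc_of_le (by norm_num : (0:ℝ) ≤ 1)] at ht
    have : t ≠ 0 := ne_of_gt ht.1
    simp only [ffun, if_neg this]
    ring
  rw [hcongr, intervalIntegral.integral_const_mul, integral_arctan_div]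


end CatalanAux

open Filter Topology MeasureTheory Set in
/-- `∫_{−1}^1 (πt/2)/sin(πt/2) dt = 8C/π`, where
`C = ∑_{k=0}^∞ (−1)^k/(2k+1)²` is Catalan's constant (the integrand extended by
the value `1` at `t = 0`). -/
theorem stmt_10 :
    (∫ t in (-1 : ℝ)..1,
        (if t = 0 then 1 else (π * t / 2) / Real.sin (π * t / 2))) =
      8 * (∑' k : ℕ, (-1 : ℝ) ^ k / (2 * (k : ℝ) + 1) ^ 2) / π := by
  have hpi := Real.pi_pos
  have hpin : (π/2 : ℝ) ≠ 0 := by positivity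
  -- rewrite integrand as Hfun (π/2 * t)
  have hG : ∀ t : ℝ, (if t = 0 then (1:ℝ) else (π * t / 2) / Real.sin (π * t / 2))
      = Hfun (π/2 * t) := by
    intro t
    by_cases ht : t = 0
    · subst ht; simp [Hfun]
    · have h2 : π/2 * t ≠ 0 := mul_ne_zero hpin ht
      rw [if_neg ht]
      simp only [Hfun, if_neg h2]
      rw [show π * t / 2 = π/2 * t by ring]
  simp_rw [hG]
  rw [intervalIntegral.integral_comp_mul_left (fun x => Hfun x) hpin]
  rw [mul_neg_one, mul_one]
  -- evenness: ∫_{-π/2}^{π/2} = 2 ∫_0^{π/2}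
  have hint1 : IntervalIntegrable Hfun volume (-(π/2)) 0 := by
    apply ContinuousOn.intervalIntegrable
    apply continuousOn_Hfun.mono
    rw [Set.uIcc_of_le (by linarith)]
    apply Set.Icc_subset_Icc <;> linarith
  have hint2 : IntervalIntegrable Hfun volume 0 (π/2) := by
    apply ContinuousOn.intervalIntegrable
    apply continuousOn_Hfun.mono
    rw [Set.uIcc_of_le (by linarith)]
    apply Set.Icc_subset_Icc <;> linarith
  have hsplit := intervalIntegral.integral_add_adjacent_intervals hint1 hint2
  have heven : (∫ x in (-(π/2))..(0:ℝ), Hfun x) = ∫ x in (0:ℝ)..(π/2), Hfun x := by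
    have hc := intervalIntegral.integral_comp_neg (a := (0:ℝ)) (b := π/2) Hfun
    rw [neg_zero] at hc
    rw [← hc]
    apply intervalIntegral.integral_congr
    intro x _
    by_cases hx : x = 0
    · subst hx; simp
    · have : -x ≠ 0 := neg_ne_zero.mpr hx
      simp only [Hfun, if_neg hx, if_neg this, Real.sin_neg]
      rw [neg_div_neg_eq]
  rw [← hsplit, heven, integral_Hfun_half]
  rw [smul_eq_mul]
  field_simp
  ring
end

section
/- ∫_{−1}^{1} ( (πt/2)/sin(πt/2) )^2 dt = 4 ln 2 (the integrand extended by the value 1 at t = 0). -/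
open Real intervalIntegral
open MeasureTheory Set Filter

-- Step 1: log integrable on 0..1
lemma intLog01 : IntervalIntegrable Real.log volume 0 1 := by
  rw [intervalIntegrable_iff_integrableOn_Ioc_of_le zero_le_one]
  apply MeasureTheory.integrableOn_Ioc_of_intervalIntegral_norm_bounded_left
    (l := (atTop : Filter ℕ)) (a := fun n : ℕ => 1/(n+1)) (I := 1) (a₀ := 0) (b := 1)
  · intro i
    have h : (0:ℝ) < 1/(i+1) := by positivity
    have := (intervalIntegrable_log (a := 1/(i+1)) (b := 1) (μ := volume) ?_)
    · exact (intervalIntegrable_iff_integrableOn_Ioc_of_le (by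
        rw [div_le_one (by positivity)]; linarith [Nat.cast_nonneg (α := ℝ) i])).mp this
    · intro hm
      rw [Set.mem_uIcc] at hm
      rcases hm with ⟨h1,_⟩|⟨_,h2⟩ <;> linarith
  · exact tendsto_one_div_add_atTop_nhds_zero_nat
  · filter_upwards [] with i
    set a : ℝ := 1/(i+1) with ha
    have h0 : (0:ℝ) < a := by positivity
    have h1 : a ≤ 1 := by rw [ha, div_le_one (by positivity)]; linarith [Nat.cast_nonneg (α := ℝ) i]
    have hnorm : ∀ x ∈ Ioc a 1, ‖Real.log x‖ = -Real.log x := by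
      intro x hx
      rw [Real.norm_eq_abs, abs_of_nonpos (Real.log_nonpos (by linarith [hx.1]) hx.2)]
    calc ∫ x in Ioc a 1, ‖Real.log x‖ = ∫ x in Ioc a 1, -Real.log x :=
          setIntegral_congr_fun measurableSet_Ioc hnorm
      _ = ∫ x in a..1, -Real.log x := by
          rw [intervalIntegral.integral_of_le h1]
      _ = -(∫ x in a..1, Real.log x) := intervalIntegral.integral_neg
      _ = -(1*Real.log 1 - a * Real.log a - 1 + a) := by
          rw [integral_log]
      _ ≤ 1 := by
          have := Real.log_nonpos h0.le h1
          have h2 : 0 ≤ a * (-Real.log a) := mul_nonneg h0.le (by linarith)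
          simp only [Real.log_one]; nlinarith

lemma intLogPi2 : IntervalIntegrable Real.log volume 0 (π/2) := by
  apply intLog01.trans
  apply ContinuousOn.intervalIntegrable
  apply Real.continuousOn_log.mono
  intro x hx
  rcases Set.mem_uIcc.mp hx with ⟨h1,_⟩|⟨_,h2⟩
  · simp only [mem_compl_iff, mem_singleton_iff]; intro h; rw [h] at h1; linarith
  · simp only [mem_compl_iff, mem_singleton_iff]; intro h; rw [h] at h2
    linarith [Real.pi_gt_three]

lemma intLogSin : IntervalIntegrable (fun x => Real.log (Real.sin x)) volume 0 (π/2) := by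
  rw [intervalIntegrable_iff_integrableOn_Ioc_of_le pi_div_two_pos.le]
  have hmeas : AEStronglyMeasurable (fun x => Real.log (Real.sin x))
      (volume.restrict (Ioc 0 (π/2))) :=
    (Real.measurable_log.comp Real.measurable_sin).aestronglyMeasurable
  apply MeasureTheory.Integrable.mono' (g := fun x => -Real.log x + Real.log (π/2)) _ hmeas
  · rw [ae_restrict_iff' measurableSet_Ioc]
    filter_upwards [] with x hx
    have hx0 : 0 < x := hx.1
    have hs : 2/π * x ≤ Real.sin x := Real.mul_le_sin hx0.le hx.2
    have hs0 : 0 < 2/π * x := by positivity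
    have hs1 : Real.sin x ≤ 1 := Real.sin_le_one x
    rw [Real.norm_eq_abs, abs_of_nonpos (Real.log_nonpos (by linarith) hs1)]
    have := Real.log_le_log hs0 hs
    rw [Real.log_mul (by positivity) hx0.ne', Real.log_div two_ne_zero
      Real.pi_ne_zero] at this
    have hlog2pi : Real.log (π/2) = Real.log π - Real.log 2 :=
      Real.log_div Real.pi_ne_zero two_ne_zero
    linarith
  · have : IntegrableOn (fun x => -Real.log x + Real.log (π/2)) (Ioc 0 (π/2)) volume := by
      apply MeasureTheory.Integrable.add
      · exact ((intervalIntegrable_iff_integrableOn_Ioc_of_le pi_div_two_pos.le).mp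
          intLogPi2).neg
      · exact integrableOn_const measure_Ioc_lt_top.ne
    exact this

lemma intLogSin' : IntervalIntegrable (fun x => Real.log (Real.sin x)) volume (π/2) π := by
  have h := (intLogSin.comp_sub_left π).symm
  have he : (fun x => Real.log (Real.sin (π - x))) = (fun x => Real.log (Real.sin x)) := by
    funext x; rw [Real.sin_pi_sub]
  rw [he] at h
  have : π - π/2 = π/2 := by ring
  rw [this, sub_zero] at h
  exact h

lemma intLogSinPi : IntervalIntegrable (fun x => Real.log (Real.sin x)) volume 0 π :=
  intLogSin.trans intLogSin'

lemma intLogCos : IntervalIntegrable (fun x => Real.log (Real.cos x)) volume 0 (π/2) := by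
  have h := intLogSin.comp_sub_left (π/2)
  have he : (fun x => Real.log (Real.sin (π/2 - x))) = (fun x => Real.log (Real.cos x)) := by
    funext x; rw [Real.sin_pi_div_two_sub]
  rw [he] at h
  simpa using h.symm

lemma logCos_eq : (∫ x in (0:ℝ)..(π/2), Real.log (Real.cos x)) =
    ∫ x in (0:ℝ)..(π/2), Real.log (Real.sin x) := by
  have h := intervalIntegral.integral_comp_sub_left
    (a := (0:ℝ)) (b := π/2) (fun x => Real.log (Real.sin x)) (π/2)
  simp only [sub_zero, sub_self, Real.sin_pi_div_two_sub] at h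
  rw [← h]

lemma logSin_second : (∫ x in (π/2:ℝ)..π, Real.log (Real.sin x)) =
    ∫ x in (0:ℝ)..(π/2), Real.log (Real.sin x) := by
  have h := intervalIntegral.integral_comp_sub_left
    (a := (0:ℝ)) (b := π/2) (fun x => Real.log (Real.sin x)) π
  simp only [sub_zero, Real.sin_pi_sub] at h
  have h2 : π - π/2 = π/2 := by ring
  rw [h2] at h
  rw [← h, intervalIntegral.integral_symm]

lemma logSin2_eq : (∫ x in (0:ℝ)..(π/2), Real.log (Real.sin (2*x))) =
    ∫ x in (0:ℝ)..(π/2), Real.log (Real.sin x) := by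
  have h := intervalIntegral.integral_comp_mul_left
    (a := (0:ℝ)) (b := π/2) (c := 2) (fun x => Real.log (Real.sin x)) two_ne_zero
  rw [h]
  have h2 : 2 * (π/2) = π := by ring
  rw [mul_zero, h2, smul_eq_mul,
    ← intervalIntegral.integral_add_adjacent_intervals (b := π/2) intLogSin intLogSin',
    logSin_second]
  ring

lemma J_val : (∫ x in (0:ℝ)..(π/2), Real.log (Real.sin x)) = -(π/2) * Real.log 2 := by
  set J := ∫ x in (0:ℝ)..(π/2), Real.log (Real.sin x) with hJ
  have hne : ∀ᵐ x : ℝ, x ≠ π/2 := by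
    refine MeasureTheory.ae_iff.mpr ?_
    simp only [not_not]
    have : {x : ℝ | x = π/2} = {π/2} := by ext y; simp
    rw [this]
    exact measure_singleton _
  have key : (∫ x in (0:ℝ)..(π/2), Real.log (Real.sin (2*x))) =
      ∫ x in (0:ℝ)..(π/2), (Real.log 2 + Real.log (Real.sin x) + Real.log (Real.cos x)) := by
    apply intervalIntegral.integral_congr_ae
    filter_upwards [hne] with x hx hmem
    rw [Set.uIoc_of_le pi_div_two_pos.le] at hmem
    have hx1 : 0 < x := hmem.1
    have hx2 : x < π/2 := lt_of_le_of_ne hmem.2 hx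
    have hsin : 0 < Real.sin x := Real.sin_pos_of_pos_of_lt_pi hx1 (by linarith [pi_pos])
    have hcos : 0 < Real.cos x := Real.cos_pos_of_mem_Ioo ⟨by linarith, hx2⟩
    rw [Real.sin_two_mul, Real.log_mul (by positivity) hcos.ne',
      Real.log_mul two_ne_zero hsin.ne']
  have hsplit : (∫ x in (0:ℝ)..(π/2),
      (Real.log 2 + Real.log (Real.sin x) + Real.log (Real.cos x))) =
      (π/2) * Real.log 2 + J + J := by
    rw [intervalIntegral.integral_add (((_root_.intervalIntegrable_const).add intLogSin)) intLogCos,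
      intervalIntegral.integral_add (_root_.intervalIntegrable_const) intLogSin,
      intervalIntegral.integral_const, logCos_eq, ← hJ]
    simp [smul_eq_mul]
  have := logSin2_eq
  rw [key, hsplit, ← hJ] at this
  linarith

noncomputable def Fc : ℝ → ℝ := fun u => (if u = 0 then 1 else u / Real.sin u)^2

lemma tendsto_div_sin : Tendsto (fun u => u / Real.sin u) (nhdsWithin 0 {(0:ℝ)}ᶜ) (nhds 1) := by
  have h := (Real.hasDerivAt_sin 0)
  rw [hasDerivAt_iff_tendsto_slope] at h
  have h2 : Tendsto (fun u : ℝ => Real.sin u / u) (nhdsWithin 0 {(0:ℝ)}ᶜ) (nhds 1) := by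
    have := h
    simp only [Real.cos_zero, Real.sin_zero, slope_def_field] at this
    convert this using 2 with u
    simp [slope, Real.sin_zero]
    ring
  have h3 := h2.inv₀ one_ne_zero
  simp only [inv_one] at h3
  convert h3 using 2 with u
  rw [inv_div]

lemma Fc_contOn : ContinuousOn Fc (Icc (-(π/2)) (π/2)) := by
  intro x hx
  rcases eq_or_ne x 0 with rfl|hx0
  · apply ContinuousAt.continuousWithinAt
    rw [ContinuousAt]
    have hsup : nhdsWithin (0:ℝ) {(0:ℝ)}ᶜ ⊔ pure 0 = nhds 0 := by
      simpa using nhdsNE_sup_pure (0:ℝ)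
    rw [← hsup]
    rw [Filter.tendsto_sup]
    constructor
    · have : Fc 0 = 1 := by simp [Fc]
      rw [this]
      have hcong : (fun u => (u / Real.sin u)^2) =ᶠ[nhdsWithin (0:ℝ) {(0:ℝ)}ᶜ] Fc := by
        filter_upwards [self_mem_nhdsWithin] with u hu
        have hu' : u ≠ 0 := hu
        simp only [Fc, if_neg hu']
      apply Tendsto.congr' hcong
      simpa using (tendsto_div_sin.pow 2)
    · have : Fc 0 = 1 := by simp [Fc]
      rw [this]
      have h := tendsto_pure_nhds Fc 0
      rwa [this] at h
  · apply ContinuousAt.continuousWithinAt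
    have hsin : Real.sin x ≠ 0 := by
      intro h
      rcases hx with ⟨h1, h2⟩
      have := Real.sin_eq_zero_iff_of_lt_of_lt (x := x)
        (by linarith [pi_pos]) (by linarith [pi_pos])
      exact hx0 (this.mp h)
    have hc : ContinuousAt (fun u => (u / Real.sin u)^2) x :=
      ((continuousAt_id.div Real.continuous_sin.continuousAt hsin).pow 2)
    apply hc.congr
    filter_upwards [eventually_ne_nhds hx0] with u hu
    simp only [Fc, if_neg hu]

lemma Fc_int : IntervalIntegrable Fc volume 0 (π/2) :=
  (Fc_contOn.mono (fun x hx => by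
    rcases Set.mem_uIcc.mp hx with ⟨h1,h2⟩|⟨h1,h2⟩ <;>
      exact ⟨by linarith [pi_div_two_pos.le], by linarith [pi_div_two_pos.le]⟩)).intervalIntegrable

lemma Fc_int' : IntervalIntegrable Fc volume (-(π/2)) 0 :=
  (Fc_contOn.mono (fun x hx => by
    rcases Set.mem_uIcc.mp hx with ⟨h1,h2⟩|⟨h1,h2⟩ <;>
      exact ⟨by linarith [pi_div_two_pos.le], by linarith [pi_div_two_pos.le]⟩)).intervalIntegrable

noncomputable def Hf : ℝ → ℝ :=
  fun u => 2*u*Real.log (Real.sin u) - u^2 * (Real.cos u / Real.sin u)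

lemma Hf_tendsto_zero : Tendsto Hf (nhdsWithin 0 (Ioi 0)) (nhds 0) := by
  have hmono : nhdsWithin (0:ℝ) (Ioi 0) ≤ nhdsWithin 0 {(0:ℝ)}ᶜ :=
    nhdsWithin_mono 0 (fun x hx => ne_of_gt hx)
  have hds : Tendsto (fun u => u / Real.sin u) (nhdsWithin (0:ℝ) (Ioi 0)) (nhds 1) :=
    tendsto_div_sin.mono_left hmono
  have hsinpos : ∀ᶠ u in nhdsWithin (0:ℝ) (Ioi 0), 0 < Real.sin u := by
    filter_upwards [Ioo_mem_nhdsGT_of_mem (Set.mem_Ico.mpr ⟨le_refl 0, pi_pos⟩)] with u hu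
    exact Real.sin_pos_of_pos_of_lt_pi hu.1 hu.2
  -- sin u → 0 within Ioi 0
  have hsin0 : Tendsto Real.sin (nhdsWithin (0:ℝ) (Ioi 0)) (nhdsWithin 0 (Ioi 0)) := by
    rw [tendsto_nhdsWithin_iff]
    constructor
    · have := Real.continuous_sin.continuousAt (x := 0)
      rw [ContinuousAt, Real.sin_zero] at this
      exact this.mono_left nhdsWithin_le_nhds
    · exact hsinpos
  have hxlogx : Tendsto (fun y : ℝ => Real.log y * y) (nhdsWithin (0:ℝ) (Ioi 0)) (nhds 0) := by
    have := tendsto_log_mul_rpow_nhdsGT_zero (r := 1) zero_lt_one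
    apply this.congr'
    filter_upwards [self_mem_nhdsWithin] with y hy
    rw [Real.rpow_one]
  have hterm1 : Tendsto (fun u => 2*u*Real.log (Real.sin u)) (nhdsWithin (0:ℝ) (Ioi 0))
      (nhds 0) := by
    have hc : Tendsto (fun u => 2 * ((u / Real.sin u) * (Real.log (Real.sin u) * Real.sin u)))
        (nhdsWithin (0:ℝ) (Ioi 0)) (nhds 0) := by
      have := (hds.mul (hxlogx.comp hsin0)).const_mul 2
      simpa using this
    apply hc.congr'
    filter_upwards [hsinpos] with u hu
    have : Real.sin u ≠ 0 := ne_of_gt hu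
    field_simp
  have hterm2 : Tendsto (fun u => u^2 * (Real.cos u / Real.sin u)) (nhdsWithin (0:ℝ) (Ioi 0))
      (nhds 0) := by
    have hucos : Tendsto (fun u : ℝ => u * Real.cos u) (nhdsWithin (0:ℝ) (Ioi 0)) (nhds 0) := by
      have h1 : Tendsto (fun u : ℝ => u * Real.cos u) (nhds 0) (nhds 0) := by
        have := (continuous_id.mul Real.continuous_cos).tendsto 0
        simp at this; exact this
      exact h1.mono_left nhdsWithin_le_nhds
    have hc := hds.mul hucos
    rw [one_mul] at hc
    apply hc.congr'
    filter_upwards [] with u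
    rw [div_eq_mul_inv, div_eq_mul_inv]
    ring
  have := hterm1.sub hterm2
  simp at this; exact this

lemma Hf_contOn : ContinuousOn Hf (Icc 0 (π/2)) := by
  intro x hx
  rcases eq_or_ne x 0 with rfl|hx0
  · rw [← continuousWithinAt_diff_self]
    have hsub : Icc (0:ℝ) (π/2) \ {0} ⊆ Ioi 0 := by
      intro y hy
      rcases hy with ⟨⟨h1, _⟩, h2⟩
      exact lt_of_le_of_ne h1 (by simpa [eq_comm] using h2)
    have h0 : Hf 0 = 0 := by simp [Hf]
    rw [ContinuousWithinAt, h0]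
    exact Hf_tendsto_zero.mono_left (nhdsWithin_mono 0 hsub)
  · apply ContinuousAt.continuousWithinAt
    have hsin : Real.sin x ≠ 0 := by
      rcases hx with ⟨h1, h2⟩
      have hxpos : 0 < x := lt_of_le_of_ne h1 (Ne.symm hx0)
      exact ne_of_gt (Real.sin_pos_of_pos_of_lt_pi hxpos (by linarith [pi_pos]))
    have hlog : ContinuousAt (fun u => Real.log (Real.sin u)) x :=
      (Real.continuousAt_log hsin).comp Real.continuous_sin.continuousAt
    exact ((continuousAt_const.mul continuousAt_id).mul hlog).sub
      ((continuousAt_id.pow 2).mul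
        (Real.continuous_cos.continuousAt.div Real.continuous_sin.continuousAt hsin))

lemma Hf_deriv {x : ℝ} (hx : x ∈ Ioo 0 (π/2)) :
    HasDerivAt Hf (Fc x + 2 * Real.log (Real.sin x)) x := by
  have hxpos : 0 < x := hx.1
  have hsin : 0 < Real.sin x := Real.sin_pos_of_pos_of_lt_pi hxpos (by linarith [pi_pos, hx.2])
  have h1 : HasDerivAt Real.sin (Real.cos x) x := Real.hasDerivAt_sin x
  have hlog : HasDerivAt (fun u => Real.log (Real.sin u)) (Real.cos x / Real.sin x) x :=
    h1.log hsin.ne'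
  have hA : HasDerivAt (fun u => 2*u*Real.log (Real.sin u))
      (2 * Real.log (Real.sin x) + 2*x*(Real.cos x / Real.sin x)) x := by
    have := ((hasDerivAt_id x).const_mul 2).mul hlog
    simp only [id_eq] at this
    refine this.congr_deriv ?_
    ring
  have hcot : HasDerivAt (fun u => Real.cos u / Real.sin u)
      ((-Real.sin x * Real.sin x - Real.cos x * Real.cos x) / Real.sin x ^ 2) x :=
    (Real.hasDerivAt_cos x).div h1 hsin.ne'
  have hB : HasDerivAt (fun u => u^2 * (Real.cos u / Real.sin u))
      (2*x*(Real.cos x / Real.sin x)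
        + x^2 * ((-Real.sin x * Real.sin x - Real.cos x * Real.cos x) / Real.sin x ^ 2)) x := by
    have := (hasDerivAt_pow 2 x).mul hcot
    refine this.congr_deriv ?_
    ring
  have := hA.sub hB
  refine this.congr_deriv ?_
  have hpyth : Real.sin x ^ 2 + Real.cos x ^ 2 = 1 := Real.sin_sq_add_cos_sq x
  have h2 : -Real.sin x * Real.sin x - Real.cos x * Real.cos x = -1 := by
    linear_combination -hpyth
  rw [Fc, if_neg hxpos.ne', div_pow, h2]
  field_simp
  ring

lemma Fc_integral : (∫ u in (0:ℝ)..(π/2), Fc u) = π * Real.log 2 := by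
  have hint : IntervalIntegrable (fun u => Fc u + 2 * Real.log (Real.sin u)) volume 0 (π/2) :=
    Fc_int.add (intLogSin.const_mul 2)
  have hftc := intervalIntegral.integral_eq_sub_of_hasDeriv_right_of_le pi_div_two_pos.le
    Hf_contOn (fun x hx => (Hf_deriv hx).hasDerivWithinAt) hint
  have hH0 : Hf 0 = 0 := by simp [Hf]
  have hHpi : Hf (π/2) = 0 := by
    simp [Hf, Real.sin_pi_div_two, Real.cos_pi_div_two]
  rw [hH0, hHpi, sub_zero] at hftc
  rw [intervalIntegral.integral_add Fc_int (intLogSin.const_mul 2),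
    intervalIntegral.integral_const_mul, J_val] at hftc
  linarith

lemma Fc_even (x : ℝ) : Fc (-x) = Fc x := by
  rcases eq_or_ne x 0 with rfl|hx
  · simp
  · rw [Fc, Fc, if_neg (neg_ne_zero.mpr hx), if_neg hx, Real.sin_neg, neg_div_neg_eq]

/-- `∫_{−1}^1 ((πt/2)/sin(πt/2))² dt = 4 ln 2` (integrand
extended by the value `1` at `t = 0`). -/
theorem stmt_11 :
    (∫ t in (-1 : ℝ)..1,
        (if t = 0 then 1 else (π * t / 2) / Real.sin (π * t / 2)) ^ 2) =
      4 * Real.log 2 := by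
  have hrewrite : (fun t : ℝ => (if t = 0 then 1 else (π * t / 2) / Real.sin (π * t / 2)) ^ 2)
      = fun t => Fc (π/2 * t) := by
    funext t
    rcases eq_or_ne t 0 with rfl|ht
    · simp [Fc]
    · have h2 : π/2 * t ≠ 0 := by
        apply mul_ne_zero _ ht
        exact div_ne_zero Real.pi_ne_zero two_ne_zero
      rw [Fc, if_neg ht, if_neg h2]
      rw [mul_comm π t, mul_div_assoc, mul_comm t (π/2)]
  rw [hrewrite]
  have hcomp := intervalIntegral.integral_comp_mul_left (a := (-1:ℝ)) (b := 1) Fc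
    (c := π/2) (by positivity)
  rw [hcomp]
  have hneg : (∫ x in (-(π/2):ℝ)..0, Fc x) = ∫ x in (0:ℝ)..(π/2), Fc x := by
    have h := intervalIntegral.integral_comp_neg (a := (0:ℝ)) (b := π/2) Fc
    simp only [Fc_even, neg_zero] at h
    exact h.symm
  have hsplit : (∫ x in (-(π/2):ℝ)..(π/2), Fc x) = 2 * (π * Real.log 2) := by
    rw [← intervalIntegral.integral_add_adjacent_intervals (b := (0:ℝ)) Fc_int' Fc_int,
      hneg, Fc_integral]
    ring
  have he1 : π/2 * (-1) = -(π/2) := by ring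
  have he2 : π/2 * 1 = π/2 := by ring
  rw [he1, he2, hsplit, smul_eq_mul]
  field_simp
  ring
end

section
/- Let ξ_1,…,ξ_M be distinct nonzero reals, m = 2M−1, and ω_m(t) = (1+ξ_M t) ∏_{ν=1}^{M−1}(1+ξ_ν t)^2. Then for t with ω_m(t) ≠ 0, 1/ω_m(t) = c_M'/(t+1/ξ_M) + ∑_{ν=1}^{M−1} [ c_ν'/(t+1/ξ_ν) + d_ν'/(t+1/ξ_ν)^2 ], where c_M' = ξ_M^{m−2}/∏_{ν=1}^{M−1}(ξ_M−ξ_ν)^2, d_ν' = ξ_ν^{m−4} / [ (ξ_ν−ξ_M) ∏_{μ≠ν, μ≤M−1}(ξ_ν−ξ_μ)^2 ], and c_ν' = −ξ_ν^{m−3} ( ξ_M + 2(ξ_ν−ξ_M) ∑_{μ≠ν, μ≤M−1} ξ_μ/(ξ_ν−ξ_μ) ) / [ (ξ_ν−ξ_M)^2 ∏_{μ≠ν, μ≤M−1}(ξ_ν−ξ_μ)^2 ]. -/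
open Finset

/-! Helper algebraic identities with atomic variables. -/

lemma split1 (a b t A : ℝ) (ha : t + a ≠ 0) (hb : t + b ≠ 0) (hab : a ≠ b) :
    A / (t + a) * ((t + b) ^ 2)⁻¹ =
      A / (b - a) ^ 2 / (t + a) +
        (-(A / (b - a) ^ 2) / (t + b) + A / (a - b) / (t + b) ^ 2) := by
  have h1 : a - b ≠ 0 := sub_ne_zero.2 hab
  have h2 : b - a ≠ 0 := sub_ne_zero.2 hab.symm
  field_simp
  ring

lemma split2 (a b t Bv Cv : ℝ) (ha : t + a ≠ 0) (hb : t + b ≠ 0) (hab : a ≠ b) :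
    (Bv / (t + a) + Cv / (t + a) ^ 2) * ((t + b) ^ 2)⁻¹ =
      ((Bv / (b - a) ^ 2 - 2 * Cv / (b - a) ^ 3) / (t + a) +
        Cv / (b - a) ^ 2 / (t + a) ^ 2) +
      ((-(Bv / (b - a) ^ 2) + 2 * Cv / (b - a) ^ 3) / (t + b) +
        (Bv / (a - b) + Cv / (a - b) ^ 2) / (t + b) ^ 2) := by
  have h1 : a - b ≠ 0 := sub_ne_zero.2 hab
  have h2 : b - a ≠ 0 := sub_ne_zero.2 hab.symm
  field_simp
  ring

lemma helper1 (A p q : ℝ) (hpq : p = -q) : -(A / p ^ 2) = (0 * q - A * 1) / q ^ 2 := by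
  subst hpq; ring

lemma helper2 (B C p q : ℝ) (hpq : p = -q) (hq : q ≠ 0) :
    -(B / p ^ 2) + 2 * C / p ^ 3 =
      (0 * q - B * 1) / q ^ 2 + (0 * q ^ 2 - C * ((2:ℝ) * q ^ 1 * 1)) / (q ^ 2) ^ 2 := by
  subst hpq
  rw [show ((-q):ℝ) ^ 2 = q ^ 2 from by ring, show ((-q):ℝ) ^ 3 = -(q ^ 3) from by ring]
  field_simp
  ring

lemma helper3 (w P T : ℝ) (hw : w ≠ 0) (hP : P ≠ 0) :
    -(1 * P + w * (T * (2 * P))) / (w * P) ^ 2 = -((w * P)⁻¹) * (w⁻¹ + 2 * T) := by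
  field_simp

lemma helper4 (E d : ℝ) (hd : d ≠ 0) : E * ((2:ℝ) * d ^ 1 * 1) = d⁻¹ * (2 * (d ^ 2 * E)) := by
  field_simp

lemma helper5 (Cu q S d : ℝ) (hd : d ≠ 0) :
    -(Cu / d ^ 2) * (q + 2 * (d⁻¹ + S)) = -Cu * (q + 2 * S) / d ^ 2 - 2 * Cu / d ^ 3 := by
  field_simp; ring

/-! Coefficients of the partial fraction decomposition. -/

noncomputable def Ac {ι : Type*} (c : ℝ) (b : ι → ℝ) (s : Finset ι) : ℝ :=
  (∏ ν ∈ s, (b ν - c) ^ 2)⁻¹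

noncomputable def Cc {ι : Type*} [DecidableEq ι] (c : ℝ) (b : ι → ℝ) (s : Finset ι) (ν : ι) : ℝ :=
  ((c - b ν) * ∏ μ ∈ s.erase ν, (b μ - b ν) ^ 2)⁻¹

noncomputable def Bc {ι : Type*} [DecidableEq ι] (c : ℝ) (b : ι → ℝ) (s : Finset ι) (ν : ι) : ℝ :=
  -(Cc c b s ν) * ((c - b ν)⁻¹ + 2 * ∑ μ ∈ s.erase ν, (b μ - b ν)⁻¹)

section
variable {ι : Type*} [DecidableEq ι] (c : ℝ) (b : ι → ℝ) (u : Finset ι) (k : ι)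

lemma lemA (hk : k ∉ u) : Ac c b (insert k u) = Ac c b u / (b k - c) ^ 2 := by
  rw [Ac, Ac, Finset.prod_insert hk, mul_inv, div_eq_mul_inv]
  ring

lemma lemC {ν : ι} (hk : k ∉ u) (hν : ν ∈ u) :
    Cc c b (insert k u) ν = Cc c b u ν / (b k - b ν) ^ 2 := by
  have hkν : k ≠ ν := fun h => hk (h ▸ hν)
  rw [Cc, Cc, Finset.erase_insert_of_ne hkν,
    Finset.prod_insert (fun h => hk (Finset.mem_of_mem_erase h)),
    show (c - b ν) * ((b k - b ν) ^ 2 * ∏ μ ∈ u.erase ν, (b μ - b ν) ^ 2) =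
      ((c - b ν) * ∏ μ ∈ u.erase ν, (b μ - b ν) ^ 2) * (b k - b ν) ^ 2 from by ring,
    mul_inv, div_eq_mul_inv]

lemma lemB {ν : ι} (hk : k ∉ u) (hν : ν ∈ u) (hd : b k ≠ b ν) :
    Bc c b (insert k u) ν =
      Bc c b u ν / (b k - b ν) ^ 2 - 2 * Cc c b u ν / (b k - b ν) ^ 3 := by
  have hkν : k ≠ ν := fun h => hk (h ▸ hν)
  have hd0 : b k - b ν ≠ 0 := sub_ne_zero.2 hd
  rw [Bc, Bc, lemC c b u k hk hν, Finset.erase_insert_of_ne hkν,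
    Finset.sum_insert (fun h => hk (Finset.mem_of_mem_erase h))]
  exact helper5 _ _ _ _ hd0

/-- evaluating the partial fraction identity at `t = -b k` gives the new
double-pole coefficient. -/
lemma eval_coeff (hk : k ∉ u) (hbk : ∀ ν ∈ u, b ν ≠ b k) (hck : b k ≠ c)
    (hIH : ∀ t : ℝ, t + c ≠ 0 → (∀ ν ∈ u, t + b ν ≠ 0) →
      ((t + c) * ∏ ν ∈ u, (t + b ν) ^ 2)⁻¹ =
        Ac c b u / (t + c) +
          ∑ ν ∈ u, (Bc c b u ν / (t + b ν) + Cc c b u ν / (t + b ν) ^ 2)) :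
    Ac c b u / (c - b k) +
      ∑ ν ∈ u, (Bc c b u ν / (b ν - b k) + Cc c b u ν / (b ν - b k) ^ 2) =
      Cc c b (insert k u) k := by
  have hw : -b k + c ≠ 0 := by
    have := sub_ne_zero.2 hck.symm; intro h; apply this; linarith
  have he : ∀ ν ∈ u, -b k + b ν ≠ 0 := by
    intro ν hν
    have := sub_ne_zero.2 (hbk ν hν); intro h; apply this; linarith
  have h := (hIH (-b k) hw he).symm
  simp only [neg_add_eq_sub] at h
  rw [Cc, Finset.erase_insert hk]
  convert h using 3

/-- differentiating the partial fraction identity at `t = -b k` gives the new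
simple-pole coefficient. -/
lemma deriv_coeff (hk : k ∉ u) (hbk : ∀ ν ∈ u, b ν ≠ b k) (hck : b k ≠ c)
    (hIH : ∀ t : ℝ, t + c ≠ 0 → (∀ ν ∈ u, t + b ν ≠ 0) →
      ((t + c) * ∏ ν ∈ u, (t + b ν) ^ 2)⁻¹ =
        Ac c b u / (t + c) +
          ∑ ν ∈ u, (Bc c b u ν / (t + b ν) + Cc c b u ν / (t + b ν) ^ 2)) :
    -(Ac c b u / (b k - c) ^ 2) +
      ∑ ν ∈ u, (-(Bc c b u ν / (b k - b ν) ^ 2) + 2 * Cc c b u ν / (b k - b ν) ^ 3) =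
      Bc c b (insert k u) k := by
  set x : ℝ := -b k with hx
  have hw : x + c ≠ 0 := by
    have := sub_ne_zero.2 hck.symm; intro h; apply this; rw [hx] at h; linarith
  have he : ∀ ν ∈ u, x + b ν ≠ 0 := by
    intro ν hν
    have := sub_ne_zero.2 (hbk ν hν); intro h; apply this; rw [hx] at h; linarith
  have hP : (∏ ν ∈ u, (x + b ν) ^ 2) ≠ 0 :=
    Finset.prod_ne_zero_iff.2 fun ν hν => pow_ne_zero _ (he ν hν)
  set f : ℝ → ℝ := fun t => ((t + c) * ∏ ν ∈ u, (t + b ν) ^ 2)⁻¹ with hf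
  set g : ℝ → ℝ := fun t => Ac c b u / (t + c) +
      ∑ ν ∈ u, (Bc c b u ν / (t + b ν) + Cc c b u ν / (t + b ν) ^ 2) with hg
  have hopen : IsOpen {t : ℝ | (t + c) * ∏ ν ∈ u, (t + b ν) ≠ 0} := by
    have hcont : Continuous fun t : ℝ => (t + c) * ∏ ν ∈ u, (t + b ν) := by
      apply Continuous.mul
      · exact continuous_id.add continuous_const
      · exact continuous_finset_prod _ fun ν _ => continuous_id.add continuous_const
    exact isOpen_ne.preimage hcont
  have hmem : x ∈ {t : ℝ | (t + c) * ∏ ν ∈ u, (t + b ν) ≠ 0} :=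
    mul_ne_zero hw (Finset.prod_ne_zero_iff.2 he)
  have hev : f =ᶠ[nhds x] g := by
    filter_upwards [hopen.mem_nhds hmem] with t htm
    have h1 : t + c ≠ 0 := fun h => htm (by simp [h])
    have h2 : ∀ ν ∈ u, t + b ν ≠ 0 := fun ν hν h =>
      htm (mul_eq_zero_of_right _ (Finset.prod_eq_zero hν h))
    exact hIH t h1 h2
  have hprod : HasDerivAt (fun t : ℝ => ∏ ν ∈ u, (t + b ν) ^ 2)
      (∑ ν ∈ u, (∏ μ ∈ u.erase ν, (x + b μ) ^ 2) * ((2 : ℝ) * (x + b ν) ^ 1 * 1)) x := by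
    have := HasDerivAt.fun_finsetProd (u := u)
      (f := fun ν t => (t + b ν) ^ 2)
      (f' := fun ν => (2 : ℝ) * (x + b ν) ^ 1 * 1)
      (fun ν _ => ((hasDerivAt_id x).add_const (b ν)).pow 2)
    simpa using this
  have hh : HasDerivAt (fun t : ℝ => (t + c) * ∏ ν ∈ u, (t + b ν) ^ 2)
      (1 * (∏ ν ∈ u, (x + b ν) ^ 2) +
        (x + c) * ∑ ν ∈ u, (∏ μ ∈ u.erase ν, (x + b μ) ^ 2) * ((2 : ℝ) * (x + b ν) ^ 1 * 1)) x :=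
    ((hasDerivAt_id x).add_const c).mul hprod
  have hne : (x + c) * ∏ ν ∈ u, (x + b ν) ^ 2 ≠ 0 := mul_ne_zero hw hP
  have hfd : HasDerivAt f
      (-(1 * (∏ ν ∈ u, (x + b ν) ^ 2) +
          (x + c) * ∑ ν ∈ u, (∏ μ ∈ u.erase ν, (x + b μ) ^ 2) * ((2 : ℝ) * (x + b ν) ^ 1 * 1)) /
        ((x + c) * ∏ ν ∈ u, (x + b ν) ^ 2) ^ 2) x := hh.inv hne
  have hgd : HasDerivAt g
      ((0 * (x + c) - Ac c b u * 1) / (x + c) ^ 2 +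
        ∑ ν ∈ u, ((0 * (x + b ν) - Bc c b u ν * 1) / (x + b ν) ^ 2 +
          (0 * (x + b ν) ^ 2 - Cc c b u ν * ((2 : ℝ) * (x + b ν) ^ 1 * 1)) / ((x + b ν) ^ 2) ^ 2)) x := by
    apply HasDerivAt.add
    · exact (hasDerivAt_const x _).div ((hasDerivAt_id x).add_const c) hw
    · apply HasDerivAt.fun_sum
      intro ν hν
      apply HasDerivAt.add
      · exact (hasDerivAt_const x _).div ((hasDerivAt_id x).add_const (b ν)) (he ν hν)
      · exact (hasDerivAt_const x _).div (((hasDerivAt_id x).add_const (b ν)).pow 2)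
          (pow_ne_zero 2 (he ν hν))
  have hEq := hev.deriv_eq
  rw [hfd.deriv, hgd.deriv] at hEq
  rw [hx] at hEq
  simp only [neg_add_eq_sub] at hEq
  have hwc : c - b k ≠ 0 := sub_ne_zero.2 hck.symm
  have hd : ∀ ν ∈ u, b ν - b k ≠ 0 := fun ν hν => sub_ne_zero.2 (hbk ν hν)
  have hP' : (∏ ν ∈ u, (b ν - b k) ^ 2) ≠ 0 :=
    Finset.prod_ne_zero_iff.2 fun ν hν => pow_ne_zero _ (hd ν hν)
  have hS : (∑ ν ∈ u, (∏ μ ∈ u.erase ν, (b μ - b k) ^ 2) * ((2 : ℝ) * (b ν - b k) ^ 1 * 1)) =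
      (∑ ν ∈ u, (b ν - b k)⁻¹) * (2 * ∏ μ ∈ u, (b μ - b k) ^ 2) := by
    rw [Finset.sum_mul]
    apply Finset.sum_congr rfl
    intro ν hν
    rw [← Finset.mul_prod_erase u (fun μ => (b μ - b k) ^ 2) hν]
    exact helper4 _ _ (hd ν hν)
  rw [Bc, Cc, Finset.erase_insert hk]
  calc -(Ac c b u / (b k - c) ^ 2) +
      ∑ ν ∈ u, (-(Bc c b u ν / (b k - b ν) ^ 2) + 2 * Cc c b u ν / (b k - b ν) ^ 3)
      = (0 * (c - b k) - Ac c b u * 1) / (c - b k) ^ 2 +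
        ∑ ν ∈ u, ((0 * (b ν - b k) - Bc c b u ν * 1) / (b ν - b k) ^ 2 +
          (0 * (b ν - b k) ^ 2 - Cc c b u ν * ((2 : ℝ) * (b ν - b k) ^ 1 * 1)) /
            ((b ν - b k) ^ 2) ^ 2) := by
        congr 1
        · exact helper1 _ _ _ (by ring)
        · exact Finset.sum_congr rfl fun ν hν => helper2 _ _ _ _ (by ring) (hd ν hν)
    _ = -(1 * (∏ ν ∈ u, (b ν - b k) ^ 2) +
          (c - b k) * ∑ ν ∈ u, (∏ μ ∈ u.erase ν, (b μ - b k) ^ 2) *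
            ((2 : ℝ) * (b ν - b k) ^ 1 * 1)) /
        ((c - b k) * ∏ ν ∈ u, (b ν - b k) ^ 2) ^ 2 := hEq.symm
    _ = -(((c - b k) * ∏ μ ∈ u, (b μ - b k) ^ 2)⁻¹) *
        ((c - b k)⁻¹ + 2 * ∑ μ ∈ u, (b μ - b k)⁻¹) := by
        rw [hS]
        exact helper3 _ _ _ hwc hP'

end

theorem pf_general {ι : Type*} [DecidableEq ι] (c : ℝ) (b : ι → ℝ) (s : Finset ι) :
    (∀ ν ∈ s, ∀ μ ∈ s, ν ≠ μ → b ν ≠ b μ) → (∀ ν ∈ s, b ν ≠ c) →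
    ∀ t : ℝ, t + c ≠ 0 → (∀ ν ∈ s, t + b ν ≠ 0) →
      ((t + c) * ∏ ν ∈ s, (t + b ν) ^ 2)⁻¹ =
        Ac c b s / (t + c) +
          ∑ ν ∈ s, (Bc c b s ν / (t + b ν) + Cc c b s ν / (t + b ν) ^ 2) := by
  induction s using Finset.induction_on with
  | empty =>
    intro _ _ t ht _
    simp [Ac, Bc, Cc]
  | @insert k u hk IH =>
    intro hdist hbc t ht htb
    have hku : ∀ ν ∈ u, b ν ≠ b k := fun ν hν =>
      hdist ν (mem_insert_of_mem hν) k (mem_insert_self k u) (fun h => hk (h ▸ hν))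
    have hkc : b k ≠ c := hbc k (mem_insert_self k u)
    have hbcu : ∀ ν ∈ u, b ν ≠ c := fun ν hν => hbc ν (mem_insert_of_mem hν)
    have hdistu : ∀ ν ∈ u, ∀ μ ∈ u, ν ≠ μ → b ν ≠ b μ := fun ν hν μ hμ h =>
      hdist ν (mem_insert_of_mem hν) μ (mem_insert_of_mem hμ) h
    have htk : t + b k ≠ 0 := htb k (mem_insert_self k u)
    have htbu : ∀ ν ∈ u, t + b ν ≠ 0 := fun ν hν => htb ν (mem_insert_of_mem hν)
    have hIH := IH hdistu hbcu
    have hid := hIH t ht htbu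
    have hBk := deriv_coeff c b u k hk hku hkc hIH
    have hCk := eval_coeff c b u k hk hku hkc hIH
    calc ((t + c) * ∏ ν ∈ insert k u, (t + b ν) ^ 2)⁻¹
        = ((t + c) * ∏ ν ∈ u, (t + b ν) ^ 2)⁻¹ * ((t + b k) ^ 2)⁻¹ := by
          rw [Finset.prod_insert hk,
            show (t + c) * ((t + b k) ^ 2 * ∏ ν ∈ u, (t + b ν) ^ 2) =
              ((t + c) * ∏ ν ∈ u, (t + b ν) ^ 2) * (t + b k) ^ 2 from by ring,
            mul_inv]
      _ = (Ac c b u / (t + c) +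
            ∑ ν ∈ u, (Bc c b u ν / (t + b ν) + Cc c b u ν / (t + b ν) ^ 2)) *
              ((t + b k) ^ 2)⁻¹ := by rw [hid]
      _ = Ac c b u / (t + c) * ((t + b k) ^ 2)⁻¹ +
            ∑ ν ∈ u, (Bc c b u ν / (t + b ν) + Cc c b u ν / (t + b ν) ^ 2) *
              ((t + b k) ^ 2)⁻¹ := by rw [add_mul, Finset.sum_mul]
      _ = (Ac c b u / (b k - c) ^ 2 / (t + c) +
            (-(Ac c b u / (b k - c) ^ 2) / (t + b k) +
              Ac c b u / (c - b k) / (t + b k) ^ 2)) +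
          ∑ ν ∈ u,
            (((Bc c b u ν / (b k - b ν) ^ 2 - 2 * Cc c b u ν / (b k - b ν) ^ 3) / (t + b ν) +
              Cc c b u ν / (b k - b ν) ^ 2 / (t + b ν) ^ 2) +
            ((-(Bc c b u ν / (b k - b ν) ^ 2) + 2 * Cc c b u ν / (b k - b ν) ^ 3) / (t + b k) +
              (Bc c b u ν / (b ν - b k) + Cc c b u ν / (b ν - b k) ^ 2) / (t + b k) ^ 2)) := by
          congr 1
          · exact split1 c (b k) t _ ht htk hkc.symm
          · exact Finset.sum_congr rfl fun ν hν =>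
              split2 (b ν) (b k) t _ _ (htbu ν hν) htk (hku ν hν)
      _ = Ac c b (insert k u) / (t + c) +
          ∑ ν ∈ insert k u,
            (Bc c b (insert k u) ν / (t + b ν) + Cc c b (insert k u) ν / (t + b ν) ^ 2) := by
          rw [Finset.sum_insert hk, Finset.sum_add_distrib, Finset.sum_add_distrib,
            Finset.sum_add_distrib, ← Finset.sum_div, ← Finset.sum_div,
            lemA c b u k hk, ← hBk, ← hCk,
            Finset.sum_congr rfl (fun ν hν =>
              congrArg₂ (· + ·)
                (congrArg (· / (t + b ν)) (lemB c b u k hk hν (hku ν hν).symm))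
                (congrArg (· / (t + b ν) ^ 2) (lemC c b u k hk hν))),
            Finset.sum_add_distrib, Finset.sum_add_distrib, Finset.sum_add_distrib]
          ring


lemma coefA (n : ℕ) (ξ : Fin (n+1) → ℝ) (ξM : ℝ) (hξ : ∀ ν, ξ ν ≠ 0) (hξM : ξM ≠ 0)
    (hd : ∀ ν, ξ ν ≠ ξM) :
    (ξM * ∏ μ, ξ μ ^ 2)⁻¹ * Ac (1/ξM) (fun ν => 1/ξ ν) univ =
      ξM ^ (2*n+1) / ∏ ν, (ξM - ξ ν) ^ 2 := by
  have hq : ∀ ν, ξM - ξ ν ≠ 0 := fun ν => sub_ne_zero.2 (hd ν).symm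
  have e1 : ∏ ν : Fin (n+1), ((1:ℝ)/ξ ν - 1/ξM) ^ 2 =
      (∏ ν, (ξM - ξ ν) ^ 2) / ((∏ ν, ξ ν ^ 2) * (ξM ^ 2) ^ (n+1)) := by
    rw [show ((∏ ν, ξ ν ^ 2) * (ξM ^ 2) ^ (n+1) : ℝ) =
        ∏ ν : Fin (n+1), (ξ ν ^ 2 * ξM ^ 2) from by
      rw [Finset.prod_mul_distrib, Finset.prod_const, card_univ, Fintype.card_fin],
      ← Finset.prod_div_distrib]
    apply Finset.prod_congr rfl
    intro ν _
    rw [show (ξ ν ^ 2 * ξM ^ 2 : ℝ) = (ξ ν * ξM) ^ 2 from by ring, ← div_pow]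
    congr 1
    rw [div_sub_div _ _ (hξ ν) hξM, one_mul, mul_comm (ξ ν) ξM, mul_one]
  rw [Ac, e1]
  have hP1 : (∏ ν : Fin (n+1), (ξM - ξ ν) ^ 2) ≠ 0 :=
    Finset.prod_ne_zero_iff.2 fun ν _ => pow_ne_zero _ (hq ν)
  have hP2 : (∏ ν : Fin (n+1), ξ ν ^ 2) ≠ 0 :=
    Finset.prod_ne_zero_iff.2 fun ν _ => pow_ne_zero _ (hξ ν)
  field_simp
  ring

lemma helper6 (xM xν q Pd Px : ℝ) (nn : ℕ) (hM : xM ≠ 0) (hν : xν ≠ 0) (hq : q ≠ 0)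
    (hPd : Pd ≠ 0) (hPx : Px ≠ 0) :
    (xM * (xν ^ 2 * Px))⁻¹ * (q / (xM * xν) * (Pd / (Px * (xν ^ 2) ^ nn)))⁻¹ =
      xν ^ (2 * nn) * xν⁻¹ / (q * Pd) := by
  field_simp
  ring

lemma helper7 (xν q Pd T xM : ℝ) (nn : ℕ) (hν : xν ≠ 0) (hq : q ≠ 0) (hPd : Pd ≠ 0) :
    xν ^ (2 * nn) * xν⁻¹ / (q * Pd) * (-(xM * xν / q + 2 * (xν * T))) =
      -(xν ^ (2 * nn)) * (xM + 2 * q * T) / (q ^ 2 * Pd) := by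
  field_simp

lemma coefC (n : ℕ) (ξ : Fin (n+1) → ℝ) (ξM : ℝ) (hξ : ∀ ν, ξ ν ≠ 0) (hξM : ξM ≠ 0)
    (hd : ∀ ν, ξ ν ≠ ξM) (hdist : Function.Injective ξ) (ν : Fin (n+1)) :
    (ξM * ∏ μ, ξ μ ^ 2)⁻¹ * Cc (1/ξM) (fun μ => 1/ξ μ) univ ν =
      ξ ν ^ (2*n) * (ξ ν)⁻¹ / ((ξ ν - ξM) * ∏ μ ∈ univ.erase ν, (ξ ν - ξ μ) ^ 2) := by
  have hcard : (univ.erase ν).card = n := by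
    rw [card_erase_of_mem (mem_univ ν), card_univ, Fintype.card_fin]
    omega
  have hq : ξ ν - ξM ≠ 0 := sub_ne_zero.2 (hd ν)
  have hνμ : ∀ μ ∈ univ.erase ν, ξ ν - ξ μ ≠ 0 := fun μ hμ =>
    sub_ne_zero.2 fun h => (mem_erase.1 hμ).1 (hdist h.symm)
  have e0 : (1/ξM - 1/ξ ν : ℝ) = (ξ ν - ξM) / (ξM * ξ ν) := by
    rw [div_sub_div _ _ hξM (hξ ν), one_mul, mul_one]
  have e1 : ∏ μ ∈ univ.erase ν, ((1:ℝ)/ξ μ - 1/ξ ν) ^ 2 =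
      (∏ μ ∈ univ.erase ν, (ξ ν - ξ μ) ^ 2) /
        ((∏ μ ∈ univ.erase ν, ξ μ ^ 2) * (ξ ν ^ 2) ^ n) := by
    rw [show ((∏ μ ∈ univ.erase ν, ξ μ ^ 2) * (ξ ν ^ 2) ^ n : ℝ) =
        ∏ μ ∈ univ.erase ν, (ξ μ ^ 2 * ξ ν ^ 2) from by
      rw [Finset.prod_mul_distrib, Finset.prod_const, hcard],
      ← Finset.prod_div_distrib]
    apply Finset.prod_congr rfl
    intro μ hμ
    rw [show (ξ μ ^ 2 * ξ ν ^ 2 : ℝ) = (ξ μ * ξ ν) ^ 2 from by ring, ← div_pow]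
    congr 1
    rw [div_sub_div _ _ (hξ μ) (hξ ν), one_mul, mul_one]
  have r1 : (∏ μ, ξ μ ^ 2 : ℝ) = ξ ν ^ 2 * ∏ μ ∈ univ.erase ν, ξ μ ^ 2 :=
    (Finset.mul_prod_erase univ (fun μ => ξ μ ^ 2) (mem_univ ν)).symm
  have hPd : (∏ μ ∈ univ.erase ν, (ξ ν - ξ μ) ^ 2) ≠ 0 :=
    Finset.prod_ne_zero_iff.2 fun μ hμ => pow_ne_zero _ (hνμ μ hμ)
  have hPx : (∏ μ ∈ univ.erase ν, ξ μ ^ 2) ≠ 0 :=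
    Finset.prod_ne_zero_iff.2 fun μ _ => pow_ne_zero _ (hξ μ)
  simp only [Cc]
  rw [e0, e1, r1]
  exact helper6 ξM (ξ ν) (ξ ν - ξM) _ _ n hξM (hξ ν) hq hPd hPx

lemma coefB (n : ℕ) (ξ : Fin (n+1) → ℝ) (ξM : ℝ) (hξ : ∀ ν, ξ ν ≠ 0) (hξM : ξM ≠ 0)
    (hd : ∀ ν, ξ ν ≠ ξM) (hdist : Function.Injective ξ) (ν : Fin (n+1)) :
    (ξM * ∏ μ, ξ μ ^ 2)⁻¹ * Bc (1/ξM) (fun μ => 1/ξ μ) univ ν =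
      -(ξ ν ^ (2*n)) * (ξM + 2 * (ξ ν - ξM) * ∑ μ ∈ univ.erase ν, ξ μ / (ξ ν - ξ μ)) /
        ((ξ ν - ξM) ^ 2 * ∏ μ ∈ univ.erase ν, (ξ ν - ξ μ) ^ 2) := by
  have hq : ξ ν - ξM ≠ 0 := sub_ne_zero.2 (hd ν)
  have hνμ : ∀ μ ∈ univ.erase ν, ξ ν - ξ μ ≠ 0 := fun μ hμ =>
    sub_ne_zero.2 fun h => (mem_erase.1 hμ).1 (hdist h.symm)
  have hPd : (∏ μ ∈ univ.erase ν, (ξ ν - ξ μ) ^ 2) ≠ 0 :=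
    Finset.prod_ne_zero_iff.2 fun μ hμ => pow_ne_zero _ (hνμ μ hμ)
  have e0 : (1/ξM - 1/ξ ν : ℝ)⁻¹ = ξM * ξ ν / (ξ ν - ξM) := by
    rw [div_sub_div _ _ hξM (hξ ν), one_mul, mul_one, inv_div]
  have esum : ∑ μ ∈ univ.erase ν, ((1:ℝ)/ξ μ - 1/ξ ν)⁻¹ =
      ξ ν * ∑ μ ∈ univ.erase ν, ξ μ / (ξ ν - ξ μ) := by
    rw [Finset.mul_sum]
    apply Finset.sum_congr rfl
    intro μ hμ
    rw [div_sub_div _ _ (hξ μ) (hξ ν), one_mul, mul_one, inv_div, mul_div_assoc']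
    ring_nf
  simp only [Bc]
  rw [show (ξM * ∏ μ, ξ μ ^ 2 : ℝ)⁻¹ *
      (-(Cc (1/ξM) (fun μ => 1/ξ μ) univ ν) *
        ((1/ξM - 1/ξ ν)⁻¹ + 2 * ∑ μ ∈ univ.erase ν, ((1:ℝ)/ξ μ - 1/ξ ν)⁻¹)) =
      ((ξM * ∏ μ, ξ μ ^ 2)⁻¹ * Cc (1/ξM) (fun μ => 1/ξ μ) univ ν) *
        (-((1/ξM - 1/ξ ν)⁻¹ + 2 * ∑ μ ∈ univ.erase ν, ((1:ℝ)/ξ μ - 1/ξ ν)⁻¹)) from by ring,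
    coefC n ξ ξM hξ hξM hd hdist ν, e0, esum]
  exact helper7 (ξ ν) (ξ ν - ξM) _ _ ξM n (hξ ν) hq hPd

/-- partial fraction decomposition for real poles of order 2
plus a simple real pole.  With `M = K + 1 ≥ 2` distinct nonzero reals
`ξ_1,…,ξ_{M−1}, ξ_M`, `m = 2M − 1` and
`ω_m(t) = (1+ξ_M t)∏_{ν=1}^{M−1}(1+ξ_ν t)²`, one has, wherever `ω_m(t) ≠ 0`,
`1/ω_m(t) = c_M'/(t+1/ξ_M) + ∑_{ν=1}^{M−1}[c_ν'/(t+1/ξ_ν) + d_ν'/(t+1/ξ_ν)²]`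
with the stated coefficients. -/
theorem stmt_16 (K : ℕ) (hK : 1 ≤ K) (M m : ℕ) (hM : M = K + 1)
    (hm : m = 2 * M - 1)
    (ξ : Fin K → ℝ) (ξM : ℝ)
    (hξ : ∀ ν, ξ ν ≠ 0) (hξM : ξM ≠ 0)
    (hdist : Function.Injective ξ) (hdistM : ∀ ν, ξ ν ≠ ξM) :
    ∀ t : ℝ, (1 + ξM * t) * ∏ ν : Fin K, (1 + ξ ν * t) ^ 2 ≠ 0 →
      1 / ((1 + ξM * t) * ∏ ν : Fin K, (1 + ξ ν * t) ^ 2) =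
        (ξM ^ ((m : ℤ) - 2) / ∏ ν : Fin K, (ξM - ξ ν) ^ 2) / (t + 1 / ξM) +
        ∑ ν : Fin K,
          ((-(ξ ν ^ ((m : ℤ) - 3)) *
              (ξM + 2 * (ξ ν - ξM) * ∑ μ ∈ univ.erase ν, ξ μ / (ξ ν - ξ μ)) /
              ((ξ ν - ξM) ^ 2 * ∏ μ ∈ univ.erase ν, (ξ ν - ξ μ) ^ 2)) /
            (t + 1 / ξ ν) +
          (ξ ν ^ ((m : ℤ) - 4) /
              ((ξ ν - ξM) * ∏ μ ∈ univ.erase ν, (ξ ν - ξ μ) ^ 2)) /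
            (t + 1 / ξ ν) ^ 2) := by
  subst hm
  subst hM
  obtain ⟨n, rfl⟩ : ∃ n, K = n + 1 := ⟨K - 1, by omega⟩
  intro t hωt
  have h1 : (1 + ξM * t) ≠ 0 := fun h => hωt (by rw [h, zero_mul])
  have hPprod : (∏ ν : Fin (n+1), (1 + ξ ν * t) ^ 2) ≠ 0 := fun h => hωt (by rw [h, mul_zero])
  have h2 : ∀ ν : Fin (n+1), 1 + ξ ν * t ≠ 0 := fun ν h =>
    hPprod (Finset.prod_eq_zero (mem_univ ν) (by rw [h]; ring))
  have efac : ∀ (a : ℝ), a ≠ 0 → (1 + a * t) = a * (t + 1/a) := by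
    intro a ha; field_simp; ring
  have htc : t + 1/ξM ≠ 0 := fun h => h1 (by rw [efac ξM hξM, h, mul_zero])
  have htb : ∀ ν ∈ (univ : Finset (Fin (n+1))), t + 1/ξ ν ≠ 0 := fun ν _ h =>
    h2 ν (by rw [efac (ξ ν) (hξ ν), h, mul_zero])
  have hdist' : ∀ ν ∈ (univ : Finset (Fin (n+1))), ∀ μ ∈ (univ : Finset (Fin (n+1))),
      ν ≠ μ → (1:ℝ)/ξ ν ≠ 1/ξ μ := by
    intro ν _ μ _ hne h
    rw [one_div, one_div] at h
    exact hne (hdist (inv_injective h))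
  have hbc' : ∀ ν ∈ (univ : Finset (Fin (n+1))), (1:ℝ)/ξ ν ≠ 1/ξM := by
    intro ν _ h
    rw [one_div, one_div] at h
    exact hdistM ν (inv_injective h)
  have key := pf_general (1/ξM) (fun ν => 1/ξ ν) univ hdist' hbc' t htc htb
  have hW : (1 + ξM * t) * ∏ ν : Fin (n+1), (1 + ξ ν * t) ^ 2 =
      (ξM * ∏ ν : Fin (n+1), ξ ν ^ 2) *
        ((t + 1/ξM) * ∏ ν : Fin (n+1), (t + 1/ξ ν) ^ 2) := by
    rw [efac ξM hξM,
      show ∏ ν : Fin (n+1), (1 + ξ ν * t) ^ 2 =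
        ∏ ν : Fin (n+1), (ξ ν ^ 2 * (t + 1/ξ ν) ^ 2) from
        Finset.prod_congr rfl fun ν _ => by rw [efac (ξ ν) (hξ ν), mul_pow],
      Finset.prod_mul_distrib]
    ring
  calc 1 / ((1 + ξM * t) * ∏ ν : Fin (n+1), (1 + ξ ν * t) ^ 2)
      = (ξM * ∏ ν : Fin (n+1), ξ ν ^ 2)⁻¹ *
          ((t + 1/ξM) * ∏ ν : Fin (n+1), (t + 1/ξ ν) ^ 2)⁻¹ := by
        rw [hW, one_div, mul_inv]
    _ = (ξM * ∏ ν : Fin (n+1), ξ ν ^ 2)⁻¹ *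
          (Ac (1/ξM) (fun ν => 1/ξ ν) univ / (t + 1/ξM) +
            ∑ ν : Fin (n+1), (Bc (1/ξM) (fun ν => 1/ξ ν) univ ν / (t + 1/ξ ν) +
              Cc (1/ξM) (fun ν => 1/ξ ν) univ ν / (t + 1/ξ ν) ^ 2)) := by rw [key]
    _ = ((ξM * ∏ ν : Fin (n+1), ξ ν ^ 2)⁻¹ * Ac (1/ξM) (fun ν => 1/ξ ν) univ) / (t + 1/ξM) +
          ∑ ν : Fin (n+1),
            (((ξM * ∏ μ : Fin (n+1), ξ μ ^ 2)⁻¹ * Bc (1/ξM) (fun ν => 1/ξ ν) univ ν) / (t + 1/ξ ν) +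
             ((ξM * ∏ μ : Fin (n+1), ξ μ ^ 2)⁻¹ * Cc (1/ξM) (fun ν => 1/ξ ν) univ ν) / (t + 1/ξ ν) ^ 2) := by
        rw [mul_add, Finset.mul_sum, mul_div_assoc']
        congr 1
        exact Finset.sum_congr rfl fun ν _ => by rw [mul_add, mul_div_assoc', mul_div_assoc']
    _ = (ξM ^ (((2 * (n + 1 + 1) - 1 : ℕ) : ℤ) - 2) / ∏ ν : Fin (n+1), (ξM - ξ ν) ^ 2) /
            (t + 1 / ξM) +
        ∑ ν : Fin (n+1),
          ((-(ξ ν ^ (((2 * (n + 1 + 1) - 1 : ℕ) : ℤ) - 3)) *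
              (ξM + 2 * (ξ ν - ξM) * ∑ μ ∈ univ.erase ν, ξ μ / (ξ ν - ξ μ)) /
              ((ξ ν - ξM) ^ 2 * ∏ μ ∈ univ.erase ν, (ξ ν - ξ μ) ^ 2)) /
            (t + 1 / ξ ν) +
          (ξ ν ^ (((2 * (n + 1 + 1) - 1 : ℕ) : ℤ) - 4) /
              ((ξ ν - ξM) * ∏ μ ∈ univ.erase ν, (ξ ν - ξ μ) ^ 2)) /
            (t + 1 / ξ ν) ^ 2) := by
        congr 1
        · rw [coefA n ξ ξM hξ hξM hdistM,
            show (((2 * (n + 1 + 1) - 1 : ℕ) : ℤ) - 2) = ((2 * n + 1 : ℕ) : ℤ) from by omega,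
            zpow_natCast]
        · apply Finset.sum_congr rfl
          intro ν _
          congr 1
          · rw [coefB n ξ ξM hξ hξM hdistM hdist ν,
              show (((2 * (n + 1 + 1) - 1 : ℕ) : ℤ) - 3) = ((2 * n : ℕ) : ℤ) from by omega,
              zpow_natCast]
          · rw [coefC n ξ ξM hξ hξM hdistM hdist ν,
              show (((2 * (n + 1 + 1) - 1 : ℕ) : ℤ) - 4) = ((2 * n : ℕ) : ℤ) - 1 from by omega,
              zpow_sub_one₀ (hξ ν), zpow_natCast]
end
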